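/- In R₁ ⊗_k R₁ = k[ℝ≥0²] with variables x and y, the quotient by the ideal ⟨x^ε − y^ε : ε > 0⟩ is isomorphic to R₁ = k[ℝ≥0] via the map sending both x^a and y^a to x^a. -/

import Mathlib

open scoped NNReal TensorProduct
abbrev R1 (k : Type) [Field k] := AddMonoidAlgebra k ℝ≥0
/-- The ideal ⟨x^ε ⊗ 1 − 1 ⊗ x^ε : ε > 0⟩ of R₁ ⊗ₖ R₁. -/
noncomputable def diffIdeal1 (k : Type) [Field k] : Ideal (R1 k ⊗[k] R1 k) :=
  Ideal.span {f | ∃ ε : ℝ≥0, 0 < ε ∧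
    f = (AddMonoidAlgebra.single ε 1 : R1 k) ⊗ₜ[k] 1 -
        1 ⊗ₜ[k] (AddMonoidAlgebra.single ε 1 : R1 k)}

noncomputable def mu (k : Type) [Field k] : R1 k ⊗[k] R1 k →ₐ[k] R1 k :=
  Algebra.TensorProduct.lmul' k

set_option synthInstance.maxHeartbeats 400000 in
lemma mu_vanish (k : Type) [Field k] : ∀ f ∈ diffIdeal1 k, mu k f = 0 := by
  intro f hf
  refine Submodule.span_induction ?_ (map_zero _) ?_ ?_ hf
  · rintro g ⟨ε, hε, rfl⟩
    simp [mu, Algebra.TensorProduct.lmul'_apply_tmul]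
  · intro a b _ _ ha hb; simp [map_add, ha, hb]
  · intro r x _ hx; simp [smul_eq_mul, map_mul, hx]

noncomputable def phi (k : Type) [Field k] :
    ((R1 k ⊗[k] R1 k) ⧸ diffIdeal1 k) →ₐ[k] R1 k :=
  Ideal.Quotient.liftₐ (diffIdeal1 k) (mu k) (mu_vanish k)

noncomputable def psi (k : Type) [Field k] :
    R1 k →ₐ[k] ((R1 k ⊗[k] R1 k) ⧸ diffIdeal1 k) :=
  (Ideal.Quotient.mkₐ k (diffIdeal1 k)).comp Algebra.TensorProduct.includeLeft

lemma phi_mk (k : Type) [Field k] (x : R1 k ⊗[k] R1 k) :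
    phi k (Ideal.Quotient.mk (diffIdeal1 k) x) = mu k x := rfl

lemma mk_eq (k : Type) [Field k] (a : ℝ≥0) :
    Ideal.Quotient.mk (diffIdeal1 k) ((AddMonoidAlgebra.single a 1 : R1 k) ⊗ₜ[k] 1) =
    Ideal.Quotient.mk (diffIdeal1 k) (1 ⊗ₜ[k] (AddMonoidAlgebra.single a 1 : R1 k)) := by
  rcases eq_or_lt_of_le (zero_le : (0:ℝ≥0) ≤ a) with h | h
  · subst h
    have h1 : (AddMonoidAlgebra.single (0:ℝ≥0) (1:k) : R1 k) = 1 := rfl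
    rw [h1]
  · rw [Ideal.Quotient.eq]
    exact Ideal.subset_span ⟨a, h, rfl⟩

theorem stmt16 (k : Type) [Field k] :
    ∃ e : ((R1 k ⊗[k] R1 k) ⧸ diffIdeal1 k) ≃+* R1 k,
      ∀ a : ℝ≥0,
        e (Ideal.Quotient.mk (diffIdeal1 k)
            ((AddMonoidAlgebra.single a 1 : R1 k) ⊗ₜ[k] 1)) =
          AddMonoidAlgebra.single a 1 ∧
        e (Ideal.Quotient.mk (diffIdeal1 k)
            (1 ⊗ₜ[k] (AddMonoidAlgebra.single a 1 : R1 k))) =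
          AddMonoidAlgebra.single a 1 := by
  have h1 : (phi k).comp (psi k) = AlgHom.id k (R1 k) := by
    refine AddMonoidAlgebra.algHom_ext ?_ (Subsingleton.elim _ _)
    intro a
    simp [phi_mk, psi, mu, Algebra.TensorProduct.lmul'_apply_tmul]
  have h2 : (psi k).comp (phi k) = AlgHom.id k _ := by
    apply Ideal.Quotient.algHom_ext
    apply Algebra.TensorProduct.ext
    · refine AddMonoidAlgebra.algHom_ext ?_ (Subsingleton.elim _ _)
      intro a
      simp [phi_mk, psi, mu, Algebra.TensorProduct.lmul'_apply_tmul]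
    · refine AddMonoidAlgebra.algHom_ext ?_ (Subsingleton.elim _ _)
      intro a
      show psi k (phi k (Ideal.Quotient.mk (diffIdeal1 k)
          (1 ⊗ₜ[k] (AddMonoidAlgebra.single a 1 : R1 k)))) =
        Ideal.Quotient.mk (diffIdeal1 k) (1 ⊗ₜ[k] (AddMonoidAlgebra.single a 1 : R1 k))
      rw [← mk_eq k a]
      simp [phi_mk, psi, mu, Algebra.TensorProduct.lmul'_apply_tmul, mk_eq k a]
  refine ⟨(AlgEquiv.ofAlgHom (phi k) (psi k) h1 h2).toRingEquiv, fun a => ⟨?_, ?_⟩⟩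
  · have h : (AlgEquiv.ofAlgHom (phi k) (psi k) h1 h2).toRingEquiv (Ideal.Quotient.mk (diffIdeal1 k)
        ((AddMonoidAlgebra.single a 1 : R1 k) ⊗ₜ[k] 1)) =
      phi k (Ideal.Quotient.mk (diffIdeal1 k)
        ((AddMonoidAlgebra.single a 1 : R1 k) ⊗ₜ[k] 1)) := rfl
    rw [h]
    simp [phi_mk, mu, Algebra.TensorProduct.lmul'_apply_tmul]
  · have h : (AlgEquiv.ofAlgHom (phi k) (psi k) h1 h2).toRingEquiv (Ideal.Quotient.mk (diffIdeal1 k)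
        (1 ⊗ₜ[k] (AddMonoidAlgebra.single a 1 : R1 k))) =
      phi k (Ideal.Quotient.mk (diffIdeal1 k)
        (1 ⊗ₜ[k] (AddMonoidAlgebra.single a 1 : R1 k))) := rfl
    rw [h]
    simp [phi_mk, mu, Algebra.TensorProduct.lmul'_apply_tmul]
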